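/- Let G be a simple 3-regular graph with girth at least 5 and let xy be an edge of G. If there exist two 5-cycles through the edge xy whose vertex sets intersect exactly in {x, y}, then W_1(μ_x^{1/4}, μ_y^{1/4}) = 1, i.e. κ_{1/4}(x,y) = 0. -/

import Mathlib

open scoped ENNReal

namespace RicciFlatCubic

variable {V : Type*}

/-- The probability measure `μ_x^p` on the vertex set: mass `p` at `x`,
mass `(1-p)/deg x` at each neighbor of `x`, and `0` elsewhere. -/
noncomputable def muMeasure (G : SimpleGraph V) [G.LocallyFinite] (p : ℝ≥0∞) (x : V) :
    V → ℝ≥0∞ := fun z =>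
  haveI : DecidableEq V := Classical.decEq V
  haveI : Decidable (G.Adj x z) := Classical.dec _
  if z = x then p
  else if G.Adj x z then (1 - p) / (G.degree x : ℝ≥0∞)
  else 0

/-- `π : V × V → [0,1]` is a transport plan from `μ₁` to `μ₂` if its marginals are `μ₁`, `μ₂`. -/
def IsTransportPlan (μ₁ μ₂ : V → ℝ≥0∞) (π : V → V → ℝ≥0∞) : Prop :=
  (∀ u v, π u v ≤ 1) ∧ (∀ u, ∑' v, π u v = μ₁ u) ∧ (∀ v, ∑' u, π u v = μ₂ v)

/-- The Wasserstein distance `W₁(μ₁, μ₂)`: the infimum over all transport plans of the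
transport cost `∑ d(u,v) π(u,v)`, where `d` is the shortest-path distance in `G`. -/
noncomputable def W1 (G : SimpleGraph V) (μ₁ μ₂ : V → ℝ≥0∞) : ℝ≥0∞ :=
  ⨅ π : {π : V → V → ℝ≥0∞ // IsTransportPlan μ₁ μ₂ π},
    ∑' q : V × V, (G.dist q.1 q.2 : ℝ≥0∞) * π.1 q.1 q.2

/-- The `p`-Ollivier-Ricci curvature `κ_p(x,y) = 1 - W₁(μ_x^p, μ_y^p)` (as a real number),
for a real idleness parameter `p`. -/
noncomputable def kappa (G : SimpleGraph V) [G.LocallyFinite] (p : ℝ) (x y : V) : ℝ :=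
  1 - (W1 G (muMeasure G (ENNReal.ofReal p) x) (muMeasure G (ENNReal.ofReal p) y)).toReal

/-- The edge `xy` lies on two 5-cycles whose vertex sets intersect exactly in `{x, y}`. -/
def TwoPentagons (G : SimpleGraph V) (x y : V) : Prop :=
  ∃ P₁ P₂ : G.Walk x x, P₁.IsCycle ∧ P₂.IsCycle ∧ P₁.length = 5 ∧ P₂.length = 5 ∧
    s(x, y) ∈ P₁.edges ∧ s(x, y) ∈ P₂.edges ∧
    {v | v ∈ P₁.support} ∩ {v | v ∈ P₂.support} = {x, y}

/-- The Petersen graph as the Kneser graph `K(5,2)`. -/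
def petersen : SimpleGraph {s : Finset (Fin 5) // s.card = 2} where
  Adj a b := Disjoint a.1 b.1
  symm := ⟨fun _ _ h => h.symm⟩
  loopless := ⟨by
    rintro ⟨s, hs⟩ h
    change Disjoint s s at h
    rw [disjoint_self] at h
    simp only [Finset.bot_eq_empty] at h
    simp [h] at hs⟩

/-- The Triplex: a 12-cycle on `ℤ/12ℤ` together with six chords. -/
def triplex : SimpleGraph (ZMod 12) :=
  SimpleGraph.fromRel fun i j =>
    j = i + 1 ∨ (i = 1 ∧ j = 7) ∨ (i = 2 ∧ j = 10) ∨ (i = 3 ∧ j = 8) ∨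
      (i = 4 ∧ j = 12) ∨ (i = 5 ∧ j = 9) ∨ (i = 6 ∧ j = 11)

/-- The dodecahedral graph: layer `0` is the outer 5-cycle `a`, layers `1`, `2` form the
middle 10-cycle `b₁ c₁ b₂ c₂ … b₅ c₅`, layer `3` is the inner 5-cycle `d`. -/
def dodecahedral : SimpleGraph (Fin 4 × ZMod 5) :=
  SimpleGraph.fromRel fun p q =>
    (p.1 = 0 ∧ q.1 = 0 ∧ q.2 = p.2 + 1) ∨
    (p.1 = 0 ∧ q.1 = 1 ∧ q.2 = p.2) ∨
    (p.1 = 1 ∧ q.1 = 2 ∧ q.2 = p.2) ∨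
    (p.1 = 2 ∧ q.1 = 1 ∧ q.2 = p.2 + 1) ∨
    (p.1 = 2 ∧ q.1 = 3 ∧ q.2 = p.2) ∨
    (p.1 = 3 ∧ q.1 = 3 ∧ q.2 = p.2 + 1)

/-- The half-dodecahedral graph: inner 5-cycle `y` (`Sum.inl`), outer 10-cycle `x`
(`Sum.inr`), and spokes `yᵢ ~ x_{2i-1}`. -/
def halfDodecahedral : SimpleGraph (ZMod 5 ⊕ ZMod 10) :=
  SimpleGraph.fromRel fun p q =>
    (∃ i : ZMod 5, p = Sum.inl i ∧ q = Sum.inl (i + 1)) ∨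
    (∃ j : ZMod 10, p = Sum.inr j ∧ q = Sum.inr (j + 1)) ∨
    (∃ i : ZMod 5, p = Sum.inl i ∧ q = Sum.inr (2 * (i.val : ZMod 10) - 1))

/-- The two-sided infinite path on `ℤ`. -/
def infinitePath : SimpleGraph ℤ := SimpleGraph.fromRel fun i j => j = i + 1

/-- The cycle `Cₙ` on `ℤ/nℤ`. -/
def cycleZMod (n : ℕ) : SimpleGraph (ZMod n) := SimpleGraph.fromRel fun i j => j = i + 1

noncomputable instance (v : {s : Finset (Fin 5) // s.card = 2}) :
    Fintype (petersen.neighborSet v) := (Set.toFinite _).fintype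

noncomputable instance (v : ZMod 12) : Fintype (triplex.neighborSet v) :=
  (Set.toFinite _).fintype

noncomputable instance (v : Fin 4 × ZMod 5) : Fintype (dodecahedral.neighborSet v) :=
  (Set.toFinite _).fintype

------------------------------------------------------------------------
-- auxiliary lemmas
------------------------------------------------------------------------

open SimpleGraph

private lemma aux41 : (4 : ℝ≥0∞) * 4⁻¹ = 1 :=
  ENNReal.mul_inv_cancel (by norm_num) (by norm_num)

private lemma aux_key1 : (1 : ℝ≥0∞) = 3 * 4⁻¹ + 4⁻¹ := by
  calc (1 : ℝ≥0∞) = 4 * 4⁻¹ := aux41.symm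
  _ = (3 + 1) * 4⁻¹ := by norm_num
  _ = 3 * 4⁻¹ + 1 * 4⁻¹ := add_mul _ _ _
  _ = 3 * 4⁻¹ + 4⁻¹ := by rw [one_mul]

private lemma aux_key2 : ((1 : ℝ≥0∞) - 1/4) / 3 = 4⁻¹ := by
  rw [one_div, ENNReal.sub_eq_of_eq_add (by norm_num) aux_key1, div_eq_mul_inv, mul_right_comm,
    mul_comm (3 : ℝ≥0∞), ENNReal.inv_mul_cancel (by norm_num) (by norm_num), one_mul]

private lemma aux_two_two : (2 : ℝ≥0∞) * 4⁻¹ + 2 * 4⁻¹ = 1 := by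
  rw [← add_mul, show (2 : ℝ≥0∞) + 2 = 4 by norm_num, aux41]

private lemma aux_six : (6 : ℝ≥0∞) * 4⁻¹ = 1 + 2 * 4⁻¹ := by
  rw [← aux41, ← add_mul]; norm_num

private lemma mu_self (G : SimpleGraph V) [G.LocallyFinite] (p : ℝ≥0∞) (x : V) :
    muMeasure G p x x = p := by simp [muMeasure]

private lemma mu_adj (G : SimpleGraph V) [G.LocallyFinite] (p : ℝ≥0∞) {x z : V}
    (h : G.Adj x z) : muMeasure G p x z = (1 - p) / (G.degree x : ℝ≥0∞) := by
  simp [muMeasure, h.ne', h]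

private lemma mu_zero (G : SimpleGraph V) [G.LocallyFinite] (p : ℝ≥0∞) {x z : V}
    (h1 : z ≠ x) (h2 : ¬ G.Adj x z) : muMeasure G p x z = 0 := by
  simp [muMeasure, h1, h2]

private lemma neighbors_eq {G : SimpleGraph V} [G.LocallyFinite] {x a b c : V}
    (hdeg : G.degree x = 3) (ha : G.Adj x a) (hb : G.Adj x b) (hc : G.Adj x c)
    (hab : a ≠ b) (hac : a ≠ c) (hbc : b ≠ c) {z : V} (hz : G.Adj x z) :
    z = a ∨ z = b ∨ z = c := by
  classical
  have hsub : ({a, b, c} : Finset V) ⊆ G.neighborFinset x := by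
    intro t ht
    simp only [Finset.mem_insert, Finset.mem_singleton] at ht
    rcases ht with rfl | rfl | rfl <;> simp [ha, hb, hc]
  have hcard : ({a, b, c} : Finset V).card = 3 := by
    rw [Finset.card_insert_of_notMem (by simp [hab, hac]),
      Finset.card_insert_of_notMem (by simp [hbc]), Finset.card_singleton]
  have heq : ({a, b, c} : Finset V) = G.neighborFinset x :=
    Finset.eq_of_subset_of_card_le hsub (by rw [hcard, G.card_neighborFinset_eq_degree, hdeg])
  have hzz : z ∈ G.neighborFinset x := by simp [hz]
  rw [← heq] at hzz
  simpa using hzz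

private lemma no_triangle {G : SimpleGraph V} (hg : 5 ≤ G.egirth) {a b c : V}
    (hab : G.Adj a b) (hbc : G.Adj b c) (hca : G.Adj c a) : False := by
  have hcyc : (Walk.cons hab (Walk.cons hbc (Walk.cons hca Walk.nil))).IsCycle := by
    rw [Walk.cons_isCycle_iff]
    refine ⟨by simp [Walk.isPath_def, hbc.ne, hca.ne, hca.ne', hab.ne, hab.ne', hbc.ne'], ?_⟩
    simp [Sym2.eq, Sym2.rel_iff', hab.ne, hab.ne', hbc.ne, hbc.ne', hca.ne, hca.ne']
  have h5 := SimpleGraph.le_egirth.mp hg a _ hcyc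
  norm_num at h5

private lemma no_square {G : SimpleGraph V} (hg : 5 ≤ G.egirth) {a b c d : V}
    (hab : G.Adj a b) (hbc : G.Adj b c) (hcd : G.Adj c d) (hda : G.Adj d a)
    (hac : a ≠ c) (hbd : b ≠ d) : False := by
  have hcyc : (Walk.cons hab (Walk.cons hbc (Walk.cons hcd
      (Walk.cons hda Walk.nil)))).IsCycle := by
    rw [Walk.cons_isCycle_iff]
    refine ⟨by simp [Walk.isPath_def, hbc.ne, hcd.ne, hda.ne, hda.ne', hac, hac.symm, hbd,
      hbd.symm, hab.ne', hbc.ne'], ?_⟩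
    simp [Sym2.eq, Sym2.rel_iff', hab.ne, hab.ne', hbc.ne, hbc.ne', hcd.ne, hcd.ne',
      hda.ne, hda.ne', hac, hac.symm, hbd, hbd.symm]
  have h5 := SimpleGraph.le_egirth.mp hg a _ hcyc
  norm_num at h5

private lemma one_le_dist {G : SimpleGraph V} {a b : V} (hne : a ≠ b) (hr : G.Reachable a b) :
    1 ≤ G.dist a b :=
  Nat.one_le_iff_ne_zero.mpr (SimpleGraph.dist_ne_zero_iff_ne_and_reachable.mpr ⟨hne, hr⟩)

private lemma two_le_dist {G : SimpleGraph V} {a b : V} (hne : a ≠ b) (hr : G.Reachable a b)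
    (hadj : ¬ G.Adj a b) : 2 ≤ G.dist a b := by
  have h0 : G.dist a b ≠ 0 := SimpleGraph.dist_ne_zero_iff_ne_and_reachable.mpr ⟨hne, hr⟩
  have h1 : G.dist a b ≠ 1 := fun h => hadj (SimpleGraph.dist_eq_one_iff_adj.mp h)
  omega

set_option maxHeartbeats 1000000 in
private lemma pentagon_struct {G : SimpleGraph V} {x y : V} (P : G.Walk x x)
    (hc : P.IsCycle) (h5 : P.length = 5) (he : s(x, y) ∈ P.edges) :
    ∃ u v w : V, G.Adj y u ∧ G.Adj u v ∧ G.Adj v w ∧ G.Adj w x ∧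
      (x ≠ y ∧ x ≠ u ∧ x ≠ v ∧ x ≠ w ∧ y ≠ u ∧ y ≠ v ∧ y ≠ w ∧ u ≠ v ∧ u ≠ w ∧ v ≠ w) ∧
      {z | z ∈ P.support} = {x, y, u, v, w} := by
  cases P with
  | nil => simp at h5
  | cons h1 q =>
  cases q with
  | nil => simp at h5
  | cons h2 q =>
  cases q with
  | nil => simp at h5
  | cons h3 q =>
  cases q with
  | nil => simp at h5
  | cons h4 q =>
  cases q with
  | nil => simp at h5
  | cons h5' q =>
  cases q with
  | cons h6 q => simp [Walk.length_cons] at h5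
  | nil =>
    clear h5
    rename_i a b c d
    have hnd := hc.2
    simp only [Walk.support_cons, Walk.support_nil, List.tail_cons, List.nodup_cons,
      List.mem_cons, List.not_mem_nil, or_false, List.mem_singleton, List.nodup_nil,
      and_true, not_or] at hnd
    obtain ⟨⟨hab, hac, had, hax⟩, ⟨hbc, hbd, hbx⟩, ⟨hcd, hcx⟩, hdx, -⟩ := hnd
    simp only [Walk.edges_cons, Walk.edges_nil, List.mem_cons, List.not_mem_nil, or_false,
      Sym2.eq, Sym2.rel_iff', Prod.mk.injEq, Prod.swap_prod_mk] at he
    have hy : y = a ∨ y = d := by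
      rcases he with (⟨-,h⟩|⟨h,-⟩)|(⟨h,-⟩|⟨h,-⟩)|(⟨h,-⟩|⟨h,-⟩)|(⟨h,-⟩|⟨h,-⟩)|⟨h,-⟩|⟨-,h⟩
      · exact Or.inl h
      · exact (hax h.symm).elim
      · exact (hax h.symm).elim
      · exact (hbx h.symm).elim
      · exact (hbx h.symm).elim
      · exact (hcx h.symm).elim
      · exact (hcx h.symm).elim
      · exact (hdx h.symm).elim
      · exact (hdx h.symm).elim
      · exact Or.inr h
    rcases hy with h | h
    · subst h
      refine ⟨b, c, d, h2, h3, h4, h5', ?_, ?_⟩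
      · exact ⟨fun h => hax h.symm, fun h => hbx h.symm, fun h => hcx h.symm,
          fun h => hdx h.symm, hab, hac, had, hbc, hbd, hcd⟩
      · ext z
        simp only [Walk.support_cons, Walk.support_nil, List.mem_cons, List.not_mem_nil,
          or_false, List.mem_singleton, Set.mem_setOf_eq, Set.mem_insert_iff,
          Set.mem_singleton_iff]
        tauto
    · subst h
      refine ⟨c, b, a, h4.symm, h3.symm, h2.symm, h1.symm, ?_, ?_⟩
      · exact ⟨fun h => hdx h.symm, fun h => hcx h.symm, fun h => hbx h.symm,
          fun h => hax h.symm, fun h => hcd h.symm, fun h => hbd h.symm,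
          fun h => had h.symm, fun h => hbc h.symm, fun h => hac h.symm,
          fun h => hab h.symm⟩
      · ext z
        simp only [Walk.support_cons, Walk.support_nil, List.mem_cons, List.not_mem_nil,
          or_false, List.mem_singleton, Set.mem_setOf_eq, Set.mem_insert_iff,
          Set.mem_singleton_iff]
        tauto

set_option maxHeartbeats 4000000 in
theorem twoPentagons_W1_eq_one {V : Type*} (G : SimpleGraph V) [G.LocallyFinite]
    (hreg : G.IsRegularOfDegree 3) (hgirth : 5 ≤ G.egirth) (x y : V) (hxy : G.Adj x y)
    (hpent : TwoPentagons G x y) :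
    W1 G (muMeasure G (1/4) x) (muMeasure G (1/4) y) = 1 := by
  classical
  obtain ⟨P₁, P₂, hc1, hc2, hl1, hl2, he1, he2, hint⟩ := hpent
  obtain ⟨u₁, v₁, w₁, hyu1, huv1, hvw1, hwx1,
    ⟨hXY, hXU1, hXV1, hXW1, hYU1, hYV1, hYW1, hUV1, hUW1, hVW1⟩, hs1⟩ :=
      pentagon_struct P₁ hc1 hl1 he1
  obtain ⟨u₂, v₂, w₂, hyu2, huv2, hvw2, hwx2,
    ⟨-, hXU2, hXV2, hXW2, hYU2, hYV2, hYW2, hUV2, hUW2, hVW2⟩, hs2⟩ :=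
      pentagon_struct P₂ hc2 hl2 he2
  rw [hs1, hs2] at hint
  -- disjointness of the two pentagons
  have key : ∀ z : V, z ∈ ({x, y, u₁, v₁, w₁} : Set V) → z ∈ ({x, y, u₂, v₂, w₂} : Set V) →
      z = x ∨ z = y := by
    intro z h1 h2
    have hz : z ∈ ({x, y} : Set V) := hint ▸ Set.mem_inter h1 h2
    simpa using hz
  have hU12 : u₁ ≠ u₂ := fun h => by
    rcases key u₁ (by simp) (by simp [h]) with h' | h'
    · exact hXU1 h'.symm
    · exact hYU1 h'.symm
  have hW12 : w₁ ≠ w₂ := fun h => by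
    rcases key w₁ (by simp) (by simp [h]) with h' | h'
    · exact hXW1 h'.symm
    · exact hYW1 h'.symm
  have hW1U2 : w₁ ≠ u₂ := fun h => by
    rcases key w₁ (by simp) (by simp [h]) with h' | h'
    · exact hXW1 h'.symm
    · exact hYW1 h'.symm
  have hW2U1 : w₂ ≠ u₁ := fun h => by
    rcases key u₁ (by simp) (by simp [h.symm]) with h' | h'
    · exact hXU1 h'.symm
    · exact hYU1 h'.symm
  -- neighborhoods
  have hNx : ∀ z, G.Adj x z → z = y ∨ z = w₁ ∨ z = w₂ :=
    fun z hz => neighbors_eq (hreg x) hxy hwx1.symm hwx2.symm hYW1 hYW2 hW12 hz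
  have hNy : ∀ z, G.Adj y z → z = x ∨ z = u₁ ∨ z = u₂ :=
    fun z hz => neighbors_eq (hreg y) hxy.symm hyu1 hyu2 hXU1 hXU2 hU12 hz
  -- non-adjacencies
  have hnyw1 : ¬ G.Adj y w₁ := fun h => no_triangle hgirth hxy h hwx1
  have hnyw2 : ¬ G.Adj y w₂ := fun h => no_triangle hgirth hxy h hwx2
  have hnxu1 : ¬ G.Adj x u₁ := fun h => no_triangle hgirth hxy hyu1 h.symm
  have hnxu2 : ¬ G.Adj x u₂ := fun h => no_triangle hgirth hxy hyu2 h.symm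
  have hnwu : ∀ {w u : V}, G.Adj w x → G.Adj y u → x ≠ u → y ≠ w → ¬ G.Adj w u :=
    fun hwx hyu hxu hyw h => no_square hgirth hxy hyu h.symm hwx hxu hyw
  have hnw1u1 : ¬ G.Adj w₁ u₁ := hnwu hwx1 hyu1 hXU1 hYW1
  have hnw1u2 : ¬ G.Adj w₁ u₂ := hnwu hwx1 hyu2 hXU2 hYW1
  have hnw2u1 : ¬ G.Adj w₂ u₁ := hnwu hwx2 hyu1 hXU1 hYW2
  have hnw2u2 : ¬ G.Adj w₂ u₂ := hnwu hwx2 hyu2 hXU2 hYW2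
  -- reachability
  have hrxu1 : G.Reachable x u₁ := hxy.reachable.trans hyu1.reachable
  have hrxu2 : G.Reachable x u₂ := hxy.reachable.trans hyu2.reachable
  have hrw1y : G.Reachable w₁ y := hwx1.reachable.trans hxy.reachable
  have hrw2y : G.Reachable w₂ y := hwx2.reachable.trans hxy.reachable
  have hrw1u1 : G.Reachable w₁ u₁ := hwx1.reachable.trans hrxu1
  have hrw1u2 : G.Reachable w₁ u₂ := hwx1.reachable.trans hrxu2
  have hrw2u1 : G.Reachable w₂ u₁ := hwx2.reachable.trans hrxu1
  have hrw2u2 : G.Reachable w₂ u₂ := hwx2.reachable.trans hrxu2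
  -- measure values
  have hmux_adj : ∀ {z : V}, G.Adj x z → muMeasure G (1/4) x z = 4⁻¹ := fun hz => by
    rw [mu_adj _ _ hz, hreg x]; exact_mod_cast aux_key2
  have hmuy_adj : ∀ {z : V}, G.Adj y z → muMeasure G (1/4) y z = 4⁻¹ := fun hz => by
    rw [mu_adj _ _ hz, hreg y]; exact_mod_cast aux_key2
  have hmux_self : muMeasure G (1/4) x x = 4⁻¹ := by rw [mu_self]; exact one_div 4
  have hmuy_self : muMeasure G (1/4) y y = 4⁻¹ := by rw [mu_self]; exact one_div 4
  refine le_antisymm ?_ ?_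
  · -- upper bound: explicit transport plan
    set π : V → V → ℝ≥0∞ := fun u v =>
      if (u = x ∧ v = x) ∨ (u = y ∧ v = y) ∨ (u = w₁ ∧ v = u₁) ∨ (u = w₂ ∧ v = u₂)
      then 4⁻¹ else 0 with hπdef
    have hπval : ∀ u v, (u = x ∧ v = x) ∨ (u = y ∧ v = y) ∨ (u = w₁ ∧ v = u₁) ∨
        (u = w₂ ∧ v = u₂) → π u v = 4⁻¹ := fun u v h => by rw [hπdef]; exact if_pos h
    have hπzero : ∀ u v, ¬((u = x ∧ v = x) ∨ (u = y ∧ v = y) ∨ (u = w₁ ∧ v = u₁) ∨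
        (u = w₂ ∧ v = u₂)) → π u v = 0 := fun u v h => by rw [hπdef]; exact if_neg h
    have hplan : IsTransportPlan (muMeasure G (1/4) x) (muMeasure G (1/4) y) π := by
      refine ⟨fun u v => ?_, fun u => ?_, fun v => ?_⟩
      · rw [hπdef]; dsimp only; split_ifs
        · exact ENNReal.inv_le_one.mpr (by norm_num)
        · exact zero_le_one
      · -- row sums
        by_cases hux : u = x
        · subst hux
          rw [tsum_eq_single u (fun v hv => hπzero _ _ (by
              rintro (⟨-, rfl⟩ | ⟨h, -⟩ | ⟨h, -⟩ | ⟨h, -⟩)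
              exacts [hv rfl, hXY h, hXW1 h, hXW2 h])),
            hπval _ _ (Or.inl ⟨rfl, rfl⟩), hmux_self]
        by_cases huy : u = y
        · subst huy
          rw [tsum_eq_single u (fun v hv => hπzero _ _ (by
              rintro (⟨h, -⟩ | ⟨-, rfl⟩ | ⟨h, -⟩ | ⟨h, -⟩)
              exacts [hXY h.symm, hv rfl, hYW1 h, hYW2 h])),
            hπval _ _ (Or.inr (Or.inl ⟨rfl, rfl⟩)), hmux_adj hxy]
        by_cases huw1 : u = w₁
        · subst huw1
          rw [tsum_eq_single u₁ (fun v hv => hπzero _ _ (by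
              rintro (⟨h, -⟩ | ⟨h, -⟩ | ⟨-, rfl⟩ | ⟨h, -⟩)
              exacts [hXW1 h.symm, hYW1 h.symm, hv rfl, hW12 h])),
            hπval _ _ (Or.inr (Or.inr (Or.inl ⟨rfl, rfl⟩))), hmux_adj hwx1.symm]
        by_cases huw2 : u = w₂
        · subst huw2
          rw [tsum_eq_single u₂ (fun v hv => hπzero _ _ (by
              rintro (⟨h, -⟩ | ⟨h, -⟩ | ⟨h, -⟩ | ⟨-, rfl⟩)
              exacts [hXW2 h.symm, hYW2 h.symm, hW12 h.symm, hv rfl])),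
            hπval _ _ (Or.inr (Or.inr (Or.inr ⟨rfl, rfl⟩))), hmux_adj hwx2.symm]
        · have : ∀ v, π u v = 0 := fun v => hπzero _ _ (by
            rintro (⟨h, -⟩ | ⟨h, -⟩ | ⟨h, -⟩ | ⟨h, -⟩)
            exacts [hux h, huy h, huw1 h, huw2 h])
          rw [tsum_eq_single u (fun v _ => this v), this u,
            mu_zero _ _ hux (fun h => (hNx u h).elim huy (fun h' => h'.elim huw1 huw2))]
      · -- column sums
        by_cases hvx : v = x
        · subst hvx
          rw [tsum_eq_single v (fun u hu => hπzero _ _ (by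
              rintro (⟨rfl, -⟩ | ⟨-, h⟩ | ⟨-, h⟩ | ⟨-, h⟩)
              exacts [hu rfl, hXY h, hXU1 h, hXU2 h])),
            hπval _ _ (Or.inl ⟨rfl, rfl⟩), hmuy_adj hxy.symm]
        by_cases hvy : v = y
        · subst hvy
          rw [tsum_eq_single v (fun u hu => hπzero _ _ (by
              rintro (⟨-, h⟩ | ⟨rfl, -⟩ | ⟨-, h⟩ | ⟨-, h⟩)
              exacts [hXY h.symm, hu rfl, hYU1 h, hYU2 h])),
            hπval _ _ (Or.inr (Or.inl ⟨rfl, rfl⟩)), hmuy_self]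
        by_cases hvu1 : v = u₁
        · subst hvu1
          rw [tsum_eq_single w₁ (fun u hu => hπzero _ _ (by
              rintro (⟨-, h⟩ | ⟨-, h⟩ | ⟨rfl, -⟩ | ⟨-, h⟩)
              exacts [hXU1 h.symm, hYU1 h.symm, hu rfl, hU12 h])),
            hπval _ _ (Or.inr (Or.inr (Or.inl ⟨rfl, rfl⟩))), hmuy_adj hyu1]
        by_cases hvu2 : v = u₂
        · subst hvu2
          rw [tsum_eq_single w₂ (fun u hu => hπzero _ _ (by
              rintro (⟨-, h⟩ | ⟨-, h⟩ | ⟨-, h⟩ | ⟨rfl, -⟩)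
              exacts [hXU2 h.symm, hYU2 h.symm, hU12 h.symm, hu rfl])),
            hπval _ _ (Or.inr (Or.inr (Or.inr ⟨rfl, rfl⟩))), hmuy_adj hyu2]
        · have : ∀ u, π u v = 0 := fun u => hπzero _ _ (by
            rintro (⟨-, h⟩ | ⟨-, h⟩ | ⟨-, h⟩ | ⟨-, h⟩)
            exacts [hvx h, hvy h, hvu1 h, hvu2 h])
          rw [tsum_eq_single v (fun u _ => this u), this v,
            mu_zero _ _ hvy (fun h => (hNy v h).elim hvx (fun h' => h'.elim hvu1 hvu2))]
    refine le_trans (iInf_le _ ⟨π, hplan⟩) ?_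
    -- cost of the plan
    have hd1 : (G.dist w₁ u₁ : ℝ≥0∞) ≤ 2 := by
      have : G.dist w₁ u₁ ≤ 2 := le_trans
        (SimpleGraph.dist_le (Walk.cons hvw1.symm (Walk.cons huv1.symm Walk.nil))) (by simp)
      exact_mod_cast this
    have hd2 : (G.dist w₂ u₂ : ℝ≥0∞) ≤ 2 := by
      have : G.dist w₂ u₂ ≤ 2 := le_trans
        (SimpleGraph.dist_le (Walk.cons hvw2.symm (Walk.cons huv2.symm Walk.nil))) (by simp)
      exact_mod_cast this
    have hsupp : ∀ q : V × V, q ∉ ({(x, x), (y, y), (w₁, u₁), (w₂, u₂)} : Finset (V × V)) →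
        (G.dist q.1 q.2 : ℝ≥0∞) * π q.1 q.2 = 0 := by
      intro q hq
      have : π q.1 q.2 = 0 := hπzero _ _ (by
        rintro (⟨h1, h2⟩ | ⟨h1, h2⟩ | ⟨h1, h2⟩ | ⟨h1, h2⟩) <;>
          exact hq (by simp [Prod.ext_iff, h1, h2])
        )
      rw [this, mul_zero]
    rw [tsum_eq_sum hsupp]
    have hne1 : ((x, x) : V × V) ∉ ({(y, y), (w₁, u₁), (w₂, u₂)} : Finset (V × V)) := by
      simp [Prod.ext_iff, hXY, hXW1, hXW2]
    have hne2 : ((y, y) : V × V) ∉ ({(w₁, u₁), (w₂, u₂)} : Finset (V × V)) := by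
      simp [Prod.ext_iff, hYW1, hYW2]
    have hne3 : ((w₁, u₁) : V × V) ∉ ({(w₂, u₂)} : Finset (V × V)) := by
      simp [Prod.ext_iff, hW12]
    rw [show ({(x, x), (y, y), (w₁, u₁), (w₂, u₂)} : Finset (V × V)) =
      insert (x, x) (insert (y, y) (insert (w₁, u₁) {(w₂, u₂)})) from rfl,
      Finset.sum_insert hne1, Finset.sum_insert hne2, Finset.sum_insert hne3,
      Finset.sum_singleton]
    simp only [SimpleGraph.dist_self, Nat.cast_zero, zero_mul, zero_add]
    rw [hπval _ _ (Or.inr (Or.inr (Or.inl ⟨rfl, rfl⟩))),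
      hπval _ _ (Or.inr (Or.inr (Or.inr ⟨rfl, rfl⟩)))]
    calc (G.dist w₁ u₁ : ℝ≥0∞) * 4⁻¹ + (G.dist w₂ u₂ : ℝ≥0∞) * 4⁻¹
        ≤ 2 * 4⁻¹ + 2 * 4⁻¹ := add_le_add (mul_le_mul_left hd1 _) (mul_le_mul_left hd2 _)
      _ = 1 := aux_two_two
  · -- lower bound
    refine le_iInf ?_
    rintro ⟨π, hb, hrow, hcol⟩
    dsimp only
    set g : V → ℝ≥0∞ := fun z => if z = w₁ ∨ z = w₂ then 2 else if z = x ∨ z = y then 1 else 0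
      with hgdef
    have hgw1 : g w₁ = 2 := by rw [hgdef]; exact if_pos (Or.inl rfl)
    have hgw2 : g w₂ = 2 := by rw [hgdef]; exact if_pos (Or.inr rfl)
    have hgx : g x = 1 := by
      rw [hgdef]; dsimp only
      rw [if_neg (by rintro (h | h); exacts [hXW1 h, hXW2 h]), if_pos (Or.inl rfl)]
    have hgy : g y = 1 := by
      rw [hgdef]; dsimp only
      rw [if_neg (by rintro (h | h); exacts [hYW1 h, hYW2 h]), if_pos (Or.inr rfl)]
    have hgu1 : g u₁ = 0 := by
      rw [hgdef]; dsimp only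
      rw [if_neg (by rintro (h | h); exacts [hUW1 h, hW2U1 h.symm]),
        if_neg (by rintro (h | h); exacts [hXU1 h.symm, hYU1 h.symm])]
    have hgu2 : g u₂ = 0 := by
      rw [hgdef]; dsimp only
      rw [if_neg (by rintro (h | h); exacts [hW1U2 h.symm, hUW2 h]),
        if_neg (by rintro (h | h); exacts [hXU2 h.symm, hYU2 h.symm])]
    have hgother : ∀ z, z ≠ x → z ≠ y → z ≠ w₁ → z ≠ w₂ → g z = 0 := by
      intro z h1 h2 h3 h4
      rw [hgdef]; dsimp only
      rw [if_neg (by rintro (h | h); exacts [h3 h, h4 h]),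
        if_neg (by rintro (h | h); exacts [h1 h, h2 h])]
    -- support of the plan
    have hrowsupp : ∀ u v : V, π u v ≠ 0 → u = x ∨ u = y ∨ u = w₁ ∨ u = w₂ := by
      intro u v h
      by_contra hcon
      push_neg at hcon
      obtain ⟨h1, h2, h3, h4⟩ := hcon
      have hz : muMeasure G (1/4) x u = 0 :=
        mu_zero _ _ h1 (fun h => (hNx u h).elim h2 (fun h' => h'.elim h3 h4))
      have hle : π u v ≤ muMeasure G (1/4) x u := (hrow u) ▸ ENNReal.le_tsum v
      exact h (le_antisymm (hz ▸ hle) zero_le)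
    have hcolsupp : ∀ u v : V, π u v ≠ 0 → v = x ∨ v = y ∨ v = u₁ ∨ v = u₂ := by
      intro u v h
      by_contra hcon
      push_neg at hcon
      obtain ⟨h1, h2, h3, h4⟩ := hcon
      have hz : muMeasure G (1/4) y v = 0 :=
        mu_zero _ _ h2 (fun h => (hNy v h).elim h1 (fun h' => h'.elim h3 h4))
      have hle : π u v ≤ muMeasure G (1/4) y v := (hcol v) ▸ ENNReal.le_tsum u
      exact h (le_antisymm (hz ▸ hle) zero_le)
    -- pointwise inequality
    have hpoint : ∀ u v : V, g u * π u v ≤ (G.dist u v : ℝ≥0∞) * π u v + g v * π u v := by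
      intro u v
      by_cases h0 : π u v = 0
      · simp [h0]
      have hd1e : ∀ {a b : V}, a ≠ b → G.Reachable a b →
          (1 : ℝ≥0∞) ≤ (G.dist a b : ℝ≥0∞) := fun h r => by
        exact_mod_cast one_le_dist h r
      have hd2e : ∀ {a b : V}, a ≠ b → G.Reachable a b → ¬ G.Adj a b →
          (2 : ℝ≥0∞) ≤ (G.dist a b : ℝ≥0∞) := fun h r na => by
        exact_mod_cast two_le_dist h r na
      have hkey : g u ≤ (G.dist u v : ℝ≥0∞) + g v := by
        rcases hrowsupp u v h0 with rfl | rfl | rfl | rfl <;>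
          rcases hcolsupp u v h0 with rfl | rfl | rfl | rfl
        · rw [hgx]; exact le_add_left le_rfl
        · rw [hgx, hgy]; exact le_add_self
        · rw [hgx, hgu1, add_zero]; exact hd1e hXU1 hrxu1
        · rw [hgx, hgu2, add_zero]; exact hd1e hXU2 hrxu2
        · rw [hgy, hgx]; exact le_add_self
        · rw [hgy]; exact le_add_left le_rfl
        · rw [hgy, hgu1, add_zero]; exact hd1e hYU1 hyu1.reachable
        · rw [hgy, hgu2, add_zero]; exact hd1e hYU2 hyu2.reachable
        · rw [hgw1, hgx]
          exact le_trans (by norm_num)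
            (add_le_add_left (hd1e (fun h => hXW1 h.symm) hwx1.reachable) 1)
        · rw [hgw1, hgy]
          exact le_trans (by norm_num)
            (add_le_add_left (hd1e (fun h => hYW1 h.symm) hrw1y) 1)
        · rw [hgw1, hgu1, add_zero]
          exact hd2e (fun h => hUW1 h.symm) hrw1u1 hnw1u1
        · rw [hgw1, hgu2, add_zero]; exact hd2e hW1U2 hrw1u2 hnw1u2
        · rw [hgw2, hgx]
          exact le_trans (by norm_num)
            (add_le_add_left (hd1e (fun h => hXW2 h.symm) hwx2.reachable) 1)
        · rw [hgw2, hgy]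
          exact le_trans (by norm_num)
            (add_le_add_left (hd1e (fun h => hYW2 h.symm) hrw2y) 1)
        · rw [hgw2, hgu1, add_zero]; exact hd2e hW2U1 hrw2u1 hnw2u1
        · rw [hgw2, hgu2, add_zero]
          exact hd2e (fun h => hUW2 h.symm) hrw2u2 hnw2u2
      calc g u * π u v ≤ ((G.dist u v : ℝ≥0∞) + g v) * π u v := mul_le_mul_left hkey _
      _ = (G.dist u v : ℝ≥0∞) * π u v + g v * π u v := add_mul _ _ _
    -- summing
    have hsum : ∑' q : V × V, g q.1 * π q.1 q.2 ≤
        (∑' q : V × V, (G.dist q.1 q.2 : ℝ≥0∞) * π q.1 q.2) +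
          ∑' q : V × V, g q.2 * π q.1 q.2 := by
      rw [← ENNReal.tsum_add]
      exact ENNReal.tsum_le_tsum fun q => hpoint q.1 q.2
    have hA : ∑' q : V × V, g q.1 * π q.1 q.2 = 6 * 4⁻¹ := by
      rw [ENNReal.tsum_prod']
      have : ∀ u : V, ∑' v, g u * π u v = g u * muMeasure G (1/4) x u := by
        intro u; rw [ENNReal.tsum_mul_left, hrow u]
      rw [tsum_congr this, tsum_eq_sum (s := ({x, y, w₁, w₂} : Finset V))
        (fun z hz => by
          simp only [Finset.mem_insert, Finset.mem_singleton, not_or] at hz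
          rw [hgother z hz.1 hz.2.1 hz.2.2.1 hz.2.2.2, zero_mul])]
      rw [Finset.sum_insert (by simp [hXY, hXW1, hXW2]),
        Finset.sum_insert (by simp [hYW1, hYW2]),
        Finset.sum_insert (by simp [hW12]), Finset.sum_singleton]
      rw [hgx, hgy, hgw1, hgw2, hmux_self, hmux_adj hxy, hmux_adj hwx1.symm, hmux_adj hwx2.symm]
      rw [one_mul, show (6 : ℝ≥0∞) = 1 + (1 + (2 + 2)) by norm_num, add_mul, add_mul,
        add_mul, one_mul]
    have hB : ∑' q : V × V, g q.2 * π q.1 q.2 = 2 * 4⁻¹ := by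
      rw [ENNReal.tsum_prod', ENNReal.tsum_comm]
      have : ∀ v : V, ∑' u, g v * π u v = g v * muMeasure G (1/4) y v := by
        intro v; rw [ENNReal.tsum_mul_left, hcol v]
      rw [tsum_congr this, tsum_eq_sum (s := ({x, y, w₁, w₂} : Finset V))
        (fun z hz => by
          simp only [Finset.mem_insert, Finset.mem_singleton, not_or] at hz
          rw [hgother z hz.1 hz.2.1 hz.2.2.1 hz.2.2.2, zero_mul])]
      rw [Finset.sum_insert (by simp [hXY, hXW1, hXW2]),
        Finset.sum_insert (by simp [hYW1, hYW2]),
        Finset.sum_insert (by simp [hW12]), Finset.sum_singleton]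
      rw [hgx, hgy, hgw1, hgw2, hmuy_self, hmuy_adj hxy.symm,
        mu_zero _ _ (fun h => hYW1 h.symm) hnyw1, mu_zero _ _ (fun h => hYW2 h.symm) hnyw2]
      rw [one_mul, mul_zero, add_zero, add_zero, ← two_mul]
    rw [hA, hB, aux_six] at hsum
    exact (ENNReal.add_le_add_iff_right
      (ENNReal.mul_ne_top (by norm_num) (ENNReal.inv_ne_top.mpr (by norm_num)))).mp hsum


end RicciFlatCubic
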